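/- Let P be a prime, D a natural number, and r : ZMod P → ℝ. Define the discrete ridgelet matrix R indexed by rows (a,b) ∈ (ZMod P)^D × ZMod P and columns x ∈ (ZMod P)^D by R[(a,b), x] = P^{-D/2} r(a·x − b), where a·x = Σ_i a_i x_i in ZMod P. If Σ_b r(b) = 0, Σ_b r(b)² = 1, and the admissibility constant C_{r,r} = Σ_v F₁[r](v) conj(F₁[r](v)) equals 1 (where F₁ is the one-dimensional discrete Fourier transform over ZMod P), then R^T R = I, i.e., R is an isometry. -/
import Mathlib


open Complex in
/-- One-dimensional discrete Fourier transform over `ZMod P` of a real function. -/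
noncomputable def F1 (P : ℕ) [NeZero P] (r : ZMod P → ℝ) (v : ZMod P) : ℂ :=
  ((P : ℝ) ^ (-(1 : ℝ) / 2) : ℝ) *
    ∑ b : ZMod P, (r b : ℂ) *
      Complex.exp (-(2 * Real.pi * Complex.I) * (v.val : ℂ) * (b.val : ℂ) / (P : ℂ))

theorem stmt4 (P : ℕ) [Fact (Nat.Prime P)] (D : ℕ) (r : ZMod P → ℝ)
    (hzero : ∑ b : ZMod P, r b = 0)
    (hnorm : ∑ b : ZMod P, (r b) ^ 2 = 1)
    (hadm : ∑ v : ZMod P, F1 P r v * (starRingEnd ℂ) (F1 P r v) = 1)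
    (R : Matrix ((Fin D → ZMod P) × ZMod P) (Fin D → ZMod P) ℝ)
    (hRdef : ∀ (ab : (Fin D → ZMod P) × ZMod P) (x : Fin D → ZMod P),
      R ab x = (P : ℝ) ^ (-(D : ℝ) / 2) * r ((∑ i, ab.1 i * x i) - ab.2)) :
    R.transpose * R = 1 := by
  have hPprime : P.Prime := Fact.out
  have hP0 : (0:ℝ) < P := by exact_mod_cast hPprime.pos
  ext x y
  rw [Matrix.mul_apply, Matrix.one_apply]
  simp only [Matrix.transpose_apply, hRdef]
  set c : ℝ := (P:ℝ) ^ (-(D:ℝ)/2) with hc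
  have hre : ∀ ab : (Fin D → ZMod P) × ZMod P,
      (c * r ((∑ i, ab.1 i * x i) - ab.2)) * (c * r ((∑ i, ab.1 i * y i) - ab.2))
      = c^2 * (r ((∑ i, ab.1 i * x i) - ab.2) * r ((∑ i, ab.1 i * y i) - ab.2)) := by
    intro ab; ring
  rw [Finset.sum_congr rfl (fun ab _ => hre ab), ← Finset.mul_sum, Fintype.sum_prod_type]
  by_cases hxy : x = y
  · subst hxy
    rw [if_pos rfl]
    have inner : ∀ a : Fin D → ZMod P,
        ∑ b : ZMod P, r ((∑ i, a i * x i) - b) * r ((∑ i, a i * x i) - b) = 1 := by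
      intro a
      have := (Equiv.subLeft (∑ i, a i * x i)).sum_comp (fun t => r t * r t)
      simp only [Equiv.subLeft_apply] at this
      rw [this]
      simpa [sq] using hnorm
    rw [Finset.sum_congr rfl (fun a _ => inner a), Finset.sum_const, Finset.card_univ]
    have hcard : Fintype.card (Fin D → ZMod P) = P ^ D := by
      simp [ZMod.card]
    rw [hcard, nsmul_eq_mul, mul_one]
    push_cast
    rw [hc, ← Real.rpow_natCast ((P:ℝ) ^ (-(D:ℝ)/2)) 2, ← Real.rpow_mul hP0.le,
      ← Real.rpow_natCast (P:ℝ) D, ← Real.rpow_add hP0,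
      show -(D:ℝ)/2 * (2:ℕ) + (D:ℕ) = 0 by push_cast; ring, Real.rpow_zero]
  · rw [if_neg hxy]
    -- Off-diagonal: show the double sum vanishes.
    set G : ZMod P → ℝ := fun t => ∑ b : ZMod P, r b * r (t + b) with hG
    set φ : (Fin D → ZMod P) → ZMod P := fun a => (∑ i, a i * y i) - (∑ i, a i * x i) with hφ
    have stepA : ∀ a : Fin D → ZMod P,
        ∑ b : ZMod P, r ((∑ i, a i * x i) - b) * r ((∑ i, a i * y i) - b) = G (φ a) := by
      intro a
      rw [hG]
      refine Fintype.sum_equiv (Equiv.subLeft (∑ i, a i * x i))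
        (fun b => r ((∑ i, a i * x i) - b) * r ((∑ i, a i * y i) - b))
        (fun b => r b * r (φ a + b)) (fun b => ?_)
      simp only [Equiv.subLeft_apply]
      congr 2
      rw [hφ]
      ring
    rw [Finset.sum_congr rfl (fun a _ => stepA a)]
    -- sum of G over all of ZMod P is zero
    have hGsum : ∑ t : ZMod P, G t = 0 := by
      rw [hG, Finset.sum_comm]
      have : ∀ b : ZMod P, ∑ t : ZMod P, r b * r (t + b) = 0 := by
        intro b
        rw [← Finset.mul_sum]
        have : ∑ t : ZMod P, r (t + b) = ∑ t : ZMod P, r t :=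
          Fintype.sum_equiv (Equiv.addRight b) (fun t => r (t + b)) r (fun t => rfl)
        rw [this, hzero, mul_zero]
      simp [this]
    -- shift invariance of the sum over a
    obtain ⟨i, hi⟩ : ∃ i, x i ≠ y i := by
      by_contra h
      push_neg at h
      exact hxy (funext h)
    have hw : y i - x i ≠ 0 := sub_ne_zero.mpr (Ne.symm hi)
    have shift : ∀ s : ZMod P,
        ∑ a : Fin D → ZMod P, G (φ a + s) = ∑ a : Fin D → ZMod P, G (φ a) := by
      intro s
      set v : Fin D → ZMod P := Pi.single i (s * (y i - x i)⁻¹) with hv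
      have key : ∀ a : Fin D → ZMod P, φ (a + v) = φ a + s := by
        intro a
        have hvy : ∑ j, v j * y j = s * (y i - x i)⁻¹ * y i := by
          rw [hv]
          rw [Fintype.sum_eq_single i]
          · simp
          · intro j hj; simp [Pi.single_eq_of_ne hj]
        have hvx : ∑ j, v j * x j = s * (y i - x i)⁻¹ * x i := by
          rw [hv]
          rw [Fintype.sum_eq_single i]
          · simp
          · intro j hj; simp [Pi.single_eq_of_ne hj]
        have hinv : (y i - x i)⁻¹ * (y i - x i) = 1 := by
          exact ZMod.inv_mul_of_unit _ (Ne.isUnit hw)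
        have hs : s * (y i - x i)⁻¹ * y i - s * (y i - x i)⁻¹ * x i = s := by
          have h2 : s * (y i - x i)⁻¹ * y i - s * (y i - x i)⁻¹ * x i
              = s * ((y i - x i)⁻¹ * (y i - x i)) := by ring
          rw [h2, hinv, mul_one]
        rw [hφ]
        simp only [Pi.add_apply, add_mul, Finset.sum_add_distrib, hvy, hvx]
        linear_combination hs
      have h3 : ∑ a : Fin D → ZMod P, G (φ (a + v)) = ∑ a : Fin D → ZMod P, G (φ a) :=
        Fintype.sum_equiv (Equiv.addRight v) (fun a => G (φ (a + v))) (fun a => G (φ a))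
          (fun a => rfl)
      calc ∑ a : Fin D → ZMod P, G (φ a + s)
          = ∑ a : Fin D → ZMod P, G (φ (a + v)) :=
            Finset.sum_congr rfl (fun a _ => by rw [key a])
        _ = ∑ a : Fin D → ZMod P, G (φ a) := h3
    -- average over shifts
    have hPS : (P : ℝ) * ∑ a : Fin D → ZMod P, G (φ a) = 0 := by
      have h1 : ∑ s : ZMod P, ∑ a : Fin D → ZMod P, G (φ a + s)
          = (P : ℝ) * ∑ a : Fin D → ZMod P, G (φ a) := by
        rw [Finset.sum_congr rfl (fun s _ => shift s), Finset.sum_const,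
          Finset.card_univ, ZMod.card, nsmul_eq_mul]
      have h2 : ∑ s : ZMod P, ∑ a : Fin D → ZMod P, G (φ a + s) = 0 := by
        rw [Finset.sum_comm]
        have : ∀ a : Fin D → ZMod P, ∑ s : ZMod P, G (φ a + s) = 0 := by
          intro a
          have : ∑ s : ZMod P, G (φ a + s) = ∑ t : ZMod P, G t :=
            Fintype.sum_equiv (Equiv.addLeft (φ a)) (fun s => G (φ a + s)) G (fun s => rfl)
          rw [this, hGsum]
        simp [this]
      rw [← h1, h2]
    have hS : ∑ a : Fin D → ZMod P, G (φ a) = 0 :=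
      (mul_eq_zero.mp hPS).resolve_left (ne_of_gt hP0)
    rw [hS, mul_zero]
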